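/- Let n be a positive integer, let W : Matrix (Fin n) (Fin n) ℝ be symmetric with nonnegative entries, let d i = Σ_j W i j and assume d i > 0 for all i, and let Φ : Matrix (Fin n) (Fin n) ℝ be antisymmetric. Define H i j = (W i j : ℂ) * Complex.exp (Complex.I * Φ i j) and L = I − D^{-1/2} H D^{-1/2} with D = diag(d). Then for every vector x : Fin n → ℂ, the quadratic form satisfies star x ⬝ᵥ (L.mulVec x) = (1/2) · Σ_{i,j} (W i j : ℂ) * ‖x i / √(d i) − exp(i Φ i j) · x j / √(d j)‖² , and in particular star x ⬝ᵥ (L.mulVec x) is a nonnegative real number; hence L is positive semidefinite. -/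

import Mathlib

open Matrix
open scoped ComplexOrder

theorem magnetic_laplacian_quadratic_form_psd
    (n : ℕ) (hn : 0 < n)
    (W : Matrix (Fin n) (Fin n) ℝ)
    (hWsymm : ∀ i j, W i j = W j i) (hWnonneg : ∀ i j, 0 ≤ W i j)
    (d : Fin n → ℝ) (hd : ∀ i, d i = ∑ j, W i j) (hdpos : ∀ i, 0 < d i)
    (Φ : Matrix (Fin n) (Fin n) ℝ) (hΦ : ∀ i j, Φ j i = - Φ i j)
    (H : Matrix (Fin n) (Fin n) ℂ)
    (hH : ∀ i j, H i j = (W i j : ℂ) * Complex.exp (Complex.I * (Φ i j : ℂ)))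
    (Dhalf : Matrix (Fin n) (Fin n) ℂ)
    (hD : Dhalf = Matrix.diagonal (fun i => (((Real.sqrt (d i))⁻¹ : ℝ) : ℂ)))
    (L : Matrix (Fin n) (Fin n) ℂ)
    (hL : L = 1 - Dhalf * H * Dhalf) :
    (∀ x : Fin n → ℂ,
      star x ⬝ᵥ L.mulVec x
        = (1 / 2 : ℂ) * ∑ i, ∑ j, (W i j : ℂ) *
            ((‖x i / (Real.sqrt (d i) : ℂ)
                - Complex.exp (Complex.I * (Φ i j : ℂ)) * (x j / (Real.sqrt (d j) : ℂ))‖ ^ 2 : ℝ) : ℂ)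
      ∧ 0 ≤ (star x ⬝ᵥ L.mulVec x).re ∧ (star x ⬝ᵥ L.mulVec x).im = 0)
    ∧ L.PosSemidef := by
  set e : Fin n → Fin n → ℂ := fun i j => Complex.exp (Complex.I * (Φ i j : ℂ)) with he
  have hconj_e : ∀ i j, (starRingEnd ℂ) (e i j) = e j i := by
    intro i j
    simp only [he]
    rw [← Complex.exp_conj]
    congr 1
    simp [Complex.conj_I, Complex.conj_ofReal, hΦ i j]
  have hmul_e : ∀ i j, e i j * e j i = 1 := by
    intro i j
    simp only [he]
    rw [← Complex.exp_add, hΦ i j]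
    push_cast
    ring_nf
    exact Complex.exp_zero
  have hsqrt_ne : ∀ i, ((Real.sqrt (d i) : ℂ)) ≠ 0 := by
    intro i
    exact_mod_cast ne_of_gt (Real.sqrt_pos.mpr (hdpos i))
  have hsq : ∀ i, ((Real.sqrt (d i) : ℂ)) * ((Real.sqrt (d i) : ℂ)) = (d i : ℂ) := by
    intro i
    rw [← Complex.ofReal_mul, Real.mul_self_sqrt (hdpos i).le]
  -- main quadratic form identity
  have key : ∀ x : Fin n → ℂ,
      star x ⬝ᵥ L.mulVec x
        = (1 / 2 : ℂ) * ∑ i, ∑ j, (W i j : ℂ) *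
            ((‖x i / (Real.sqrt (d i) : ℂ)
                - e i j * (x j / (Real.sqrt (d j) : ℂ))‖ ^ 2 : ℝ) : ℂ) := by
    intro x
    set y : Fin n → ℂ := fun i => x i / (Real.sqrt (d i) : ℂ) with hy
    have hyy : ∀ i, (d i : ℂ) * ((starRingEnd ℂ) (y i) * y i)
        = (starRingEnd ℂ) (x i) * x i := by
      intro i
      have hdne : (d i : ℂ) ≠ 0 := by exact_mod_cast (hdpos i).ne'
      have hys : (starRingEnd ℂ) (y i) * y i = ((starRingEnd ℂ) (x i) * x i) / (d i : ℂ) := by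
        simp only [hy, div_eq_mul_inv, RingHom.map_mul, map_inv₀, Complex.conj_ofReal,
          ← hsq i, mul_inv]
        ring
      rw [hys]
      field_simp
    have hquad : ∀ M : Matrix (Fin n) (Fin n) ℂ,
        star x ⬝ᵥ M.mulVec x = ∑ i, ∑ j, (starRingEnd ℂ) (x i) * (M i j * x j) := by
      intro M
      simp [dotProduct, mulVec, Finset.mul_sum]
    -- LHS computation
    have hLHS : star x ⬝ᵥ L.mulVec x
        = (∑ i, (starRingEnd ℂ) (x i) * x i)
          - ∑ i, ∑ j, (W i j : ℂ) * (e i j * ((starRingEnd ℂ) (y i) * y j)) := by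
      subst hL hD
      rw [sub_mulVec, dotProduct_sub, one_mulVec, hquad]
      have hxx : star x ⬝ᵥ x = ∑ i, (starRingEnd ℂ) (x i) * x i := by simp [dotProduct]
      rw [hxx]
      congr 1
      refine Finset.sum_congr rfl fun i _ => Finset.sum_congr rfl fun j _ => ?_
      rw [Matrix.mul_diagonal, Matrix.diagonal_mul, hH]
      simp only [hy, he]
      rw [div_eq_mul_inv, div_eq_mul_inv, RingHom.map_mul, map_inv₀, Complex.conj_ofReal]
      push_cast
      ring
    -- per-term expansion of the norm square
    have hterm : ∀ i j, (W i j : ℂ) * ((‖y i - e i j * y j‖ ^ 2 : ℝ) : ℂ)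
        = (W i j : ℂ) * ((starRingEnd ℂ) (y i) * y i)
          + (W i j : ℂ) * ((starRingEnd ℂ) (y j) * y j)
          - (W i j : ℂ) * (e i j * ((starRingEnd ℂ) (y i) * y j))
          - (W i j : ℂ) * (e j i * ((starRingEnd ℂ) (y j) * y i)) := by
      intro i j
      have hns : ((‖y i - e i j * y j‖ ^ 2 : ℝ) : ℂ)
          = (y i - e i j * y j) * (starRingEnd ℂ) (y i - e i j * y j) := by
        push_cast
        rw [Complex.mul_conj']
      rw [hns, map_sub, RingHom.map_mul, hconj_e]
      linear_combination ((W i j : ℂ) * ((starRingEnd ℂ) (y j) * y j)) * (hmul_e i j)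
    have hS1 : (∑ i, ∑ j, (W i j : ℂ) * ((starRingEnd ℂ) (y i) * y i))
        = ∑ i, (starRingEnd ℂ) (x i) * x i := by
      refine Finset.sum_congr rfl fun i _ => ?_
      rw [← Finset.sum_mul]
      rw [show (∑ j, (W i j : ℂ)) = (d i : ℂ) by rw [hd i]; push_cast; ring]
      exact hyy i
    have hS2 : (∑ i, ∑ j, (W i j : ℂ) * ((starRingEnd ℂ) (y j) * y j))
        = ∑ i, (starRingEnd ℂ) (x i) * x i := by
      rw [Finset.sum_comm]
      refine Finset.sum_congr rfl fun j _ => ?_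
      rw [← Finset.sum_mul]
      rw [show (∑ i, (W i j : ℂ)) = (d j : ℂ) by
        rw [hd j]; push_cast; exact Finset.sum_congr rfl fun i _ => by rw [hWsymm i j]]
      exact hyy j
    have hS4 : (∑ i, ∑ j, (W i j : ℂ) * (e j i * ((starRingEnd ℂ) (y j) * y i)))
        = ∑ i, ∑ j, (W i j : ℂ) * (e i j * ((starRingEnd ℂ) (y i) * y j)) := by
      rw [Finset.sum_comm]
      refine Finset.sum_congr rfl fun i _ => Finset.sum_congr rfl fun j _ => ?_
      rw [hWsymm j i]
    have hsplit : (∑ i, ∑ j, (W i j : ℂ) * ((‖y i - e i j * y j‖ ^ 2 : ℝ) : ℂ))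
        = (∑ i, ∑ j, (W i j : ℂ) * ((starRingEnd ℂ) (y i) * y i))
          + (∑ i, ∑ j, (W i j : ℂ) * ((starRingEnd ℂ) (y j) * y j))
          - (∑ i, ∑ j, (W i j : ℂ) * (e i j * ((starRingEnd ℂ) (y i) * y j)))
          - (∑ i, ∑ j, (W i j : ℂ) * (e j i * ((starRingEnd ℂ) (y j) * y i))) := by
      rw [Finset.sum_congr rfl fun i _ => Finset.sum_congr rfl fun j _ => hterm i j]
      simp [Finset.sum_sub_distrib, Finset.sum_add_distrib]
    rw [hLHS, hsplit, hS1, hS2, hS4]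
    ring
  -- Hermitian
  have hDherm : Dhalfᴴ = Dhalf := by
    rw [hD, Matrix.diagonal_conjTranspose,
      show (star fun i => (((Real.sqrt (d i))⁻¹ : ℝ) : ℂ))
          = fun i => (((Real.sqrt (d i))⁻¹ : ℝ) : ℂ) from
        funext fun i => by simp [Complex.conj_ofReal]]
  have hHherm : Hᴴ = H := by
    ext i j
    rw [Matrix.conjTranspose_apply, hH, hH, hWsymm j i]
    rw [star_mul', Complex.star_def, Complex.conj_ofReal, ← Complex.exp_conj]
    rw [show (starRingEnd ℂ) (Complex.I * ((Φ j i : ℝ) : ℂ)) = Complex.I * ((Φ i j : ℝ) : ℂ) by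
      simp [Complex.conj_I, Complex.conj_ofReal, hΦ i j]]
  have hherm : L.IsHermitian := by
    rw [hL]
    unfold Matrix.IsHermitian
    rw [Matrix.conjTranspose_sub, Matrix.conjTranspose_one, Matrix.conjTranspose_mul,
      Matrix.conjTranspose_mul, hDherm, hHherm]
    rw [Matrix.mul_assoc]
  -- real form
  have hreal : ∀ x : Fin n → ℂ,
      star x ⬝ᵥ L.mulVec x
        = ((((1 / 2 : ℝ) * ∑ i, ∑ j, W i j *
            (‖x i / (Real.sqrt (d i) : ℂ)
                - e i j * (x j / (Real.sqrt (d j) : ℂ))‖ ^ 2)) : ℝ) : ℂ) := by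
    intro x
    rw [key x]
    push_cast
    ring
  have hnonneg : ∀ x : Fin n → ℂ,
      0 ≤ ((1 / 2 : ℝ) * ∑ i, ∑ j, W i j *
            (‖x i / (Real.sqrt (d i) : ℂ)
                - e i j * (x j / (Real.sqrt (d j) : ℂ))‖ ^ 2)) := by
    intro x
    apply mul_nonneg (by norm_num)
    refine Finset.sum_nonneg fun i _ => Finset.sum_nonneg fun j _ => ?_
    exact mul_nonneg (hWnonneg i j) (sq_nonneg _)
  refine ⟨fun x => ⟨key x, ?_, ?_⟩, ?_⟩
  · rw [hreal x, Complex.ofReal_re]; exact hnonneg x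
  · rw [hreal x, Complex.ofReal_im]
  · refine Matrix.posSemidef_iff_dotProduct_mulVec.mpr ⟨hherm, fun x => ?_⟩
    rw [hreal x]
    exact_mod_cast hnonneg x
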